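/- arXiv:1302.4506 — 2 statements merged into one kernel-verified Lean document; each statement's English description precedes it below -/
import Mathlib

section
/- Fix integers r ≥ 1, n ≥ 2, k ≥ 1, and indices i ≠ j in {1,…,n}. Then there exists a polynomial γ in x_1,…,x_n with nonnegative rational coefficients such that, as polynomials, (-1)^r (∂G_{k,r}/∂x_i − ∂G_{k,r}/∂x_j) = (x_i − x_j) · γ. In particular, for all x ∈ [0,∞)^n one has (x_i − x_j) · (-1)^r (∂G_{k,r}/∂x_i(x) − ∂G_{k,r}/∂x_j(x)) ≥ 0, i.e. (-1)^r G_{k,r} satisfies the Schur–Ostrowski criterion for Schur convexity on [0,∞)^n. -/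
open scoped BigOperators

/-- `exp F = Σ_{j≥0} F^j / j!` for a formal power series `F` (intended for `F` with zero
constant term; the defining sum is truncated at order `k` when extracting the `k`-th
coefficient, which agrees with `Σ_{j≥0} F^j / j!` whenever `F` has zero constant term). -/
noncomputable def expPS {R : Type*} [CommRing R] [Algebra ℚ R] (F : PowerSeries R) :
    PowerSeries R :=
  PowerSeries.mk fun k =>
    PowerSeries.coeff (R := R) k (∑ j ∈ Finset.range (k + 1), (Nat.factorial j : ℚ)⁻¹ • F ^ j)

/-- The generating function
`g_r(x,t) = (Π_i (1 + x_i t)) · exp(-Σ_i Q_r(x_i t) + Q_r^-(t Σ_i x_i))`,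
as a formal power series in `t` over `ℚ[x_1,…,x_n]`, where
`Q_r(s) = Σ_{m=1}^r (-1)^(m-1) s^m/m` and `Q_r^-(s) = Σ_{odd m ≤ r} s^m/m`. -/
noncomputable def gSeries (n r : ℕ) : PowerSeries (MvPolynomial (Fin n) ℚ) :=
  (∏ i, (1 + PowerSeries.C (R := MvPolynomial (Fin n) ℚ) (MvPolynomial.X i) * PowerSeries.X)) *
    expPS (PowerSeries.mk fun m =>
      if 1 ≤ m ∧ m ≤ r then
        (-((-1 : ℚ) ^ (m - 1) * (m : ℚ)⁻¹)) • ∑ i, MvPolynomial.X i ^ m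
          + (if Odd m then ((m : ℚ)⁻¹) • (∑ i, MvPolynomial.X i) ^ m else 0)
      else 0)

/-- `G_{k,r}` as a polynomial in `x_1,…,x_n` over `ℚ`: the coefficient of `t^k` in
`g_r(x,t)`. -/
noncomputable def Gpoly (n r k : ℕ) : MvPolynomial (Fin n) ℚ :=
  PowerSeries.coeff (R := _) k (gSeries n r)

/-- `G_{k,r}(x)` for a real vector `x`. -/
noncomputable def GReal {n : ℕ} (r k : ℕ) (x : Fin n → ℝ) : ℝ :=
  MvPolynomial.aeval x (Gpoly n r k)

open PowerSeries MvPolynomial Finset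
namespace S9
variable {n : ℕ}
abbrev R (n : ℕ) := MvPolynomial (Fin n) ℚ

/-- coefficientwise nonnegative polynomial -/
def NN (p : R n) : Prop := ∀ d, 0 ≤ p.coeff d

lemma NN_zero : NN (0 : R n) := fun d => by simp
lemma NN_one : NN (1 : R n) := fun d => by
  rw [MvPolynomial.coeff_one]; split <;> norm_num
lemma NN_add {p q : R n} (hp : NN p) (hq : NN q) : NN (p + q) := fun d => by
  rw [MvPolynomial.coeff_add]; exact add_nonneg (hp d) (hq d)
lemma NN_mul {p q : R n} (hp : NN p) (hq : NN q) : NN (p * q) := fun d => by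
  rw [MvPolynomial.coeff_mul]
  exact Finset.sum_nonneg fun x _ => mul_nonneg (hp _) (hq _)
lemma NN_smul {c : ℚ} (hc : 0 ≤ c) {p : R n} (hp : NN p) : NN (c • p) := fun d => by
  rw [MvPolynomial.coeff_smul]; exact mul_nonneg hc (hp d)
lemma NN_sum {s : Finset α} {f : α → R n} (h : ∀ a ∈ s, NN (f a)) : NN (∑ a ∈ s, f a) := by
  classical
  induction s using Finset.induction_on with
  | empty => simpa using NN_zero
  | insert _ _ hx ih =>
    rw [Finset.sum_insert hx]
    exact NN_add (h _ (Finset.mem_insert_self _ _))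
      (ih fun a ha => h a (Finset.mem_insert_of_mem ha))
lemma NN_prod {s : Finset α} {f : α → R n} (h : ∀ a ∈ s, NN (f a)) : NN (∏ a ∈ s, f a) := by
  classical
  induction s using Finset.induction_on with
  | empty => simpa using NN_one
  | insert _ _ hx ih =>
    rw [Finset.prod_insert hx]
    exact NN_mul (h _ (Finset.mem_insert_self _ _))
      (ih fun a ha => h a (Finset.mem_insert_of_mem ha))
lemma NN_X (l : Fin n) : NN (X l : R n) := fun d => by
  classical
  rw [MvPolynomial.coeff_X']; split <;> norm_num
lemma NN_pow {p : R n} (hp : NN p) (m : ℕ) : NN (p ^ m) := by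
  induction m with
  | zero => simpa using NN_one
  | succ m ih => rw [pow_succ]; exact NN_mul ih hp

/-- eval at nonneg points of NN poly is nonneg -/
lemma NN_aeval_nonneg {p : R n} (hp : NN p) {x : Fin n → ℝ} (hx : ∀ l, 0 ≤ x l) :
    0 ≤ MvPolynomial.aeval x p := by
  rw [MvPolynomial.aeval_def, MvPolynomial.eval₂_eq]
  refine Finset.sum_nonneg fun d _ => mul_nonneg ?_ ?_
  · have h0 := hp d
    have : (algebraMap ℚ ℝ) (p.coeff d) = ((p.coeff d : ℚ) : ℝ) := by
      exact eq_ratCast (algebraMap ℚ ℝ) _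
    rw [this]
    exact_mod_cast h0
  · exact Finset.prod_nonneg fun l _ => pow_nonneg (hx l) _


/-- nonneg coefficient power series -/
def NNS (f : PowerSeries (R n)) : Prop := ∀ k, NN (PowerSeries.coeff (R := R n) k f)

lemma NNS_one : NNS (1 : PowerSeries (R n)) := fun k => by
  rw [PowerSeries.coeff_one]; split
  · exact NN_one
  · exact NN_zero
lemma NNS_add {f g : PowerSeries (R n)} (hf : NNS f) (hg : NNS g) : NNS (f + g) := fun k => by
  rw [map_add]; exact NN_add (hf k) (hg k)
lemma NNS_mul {f g : PowerSeries (R n)} (hf : NNS f) (hg : NNS g) : NNS (f * g) := fun k => by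
  rw [PowerSeries.coeff_mul]
  exact NN_sum fun a _ => NN_mul (hf _) (hg _)
lemma NNS_pow {f : PowerSeries (R n)} (hf : NNS f) (m : ℕ) : NNS (f ^ m) := by
  induction m with
  | zero => simpa using NNS_one
  | succ m ih => rw [pow_succ]; exact NNS_mul ih hf
lemma NNS_prod {s : Finset α} {f : α → PowerSeries (R n)} (h : ∀ a ∈ s, NNS (f a)) :
    NNS (∏ a ∈ s, f a) := by
  classical
  induction s using Finset.induction_on with
  | empty => simpa using NNS_one
  | insert _ _ hx ih =>
    rw [Finset.prod_insert hx]
    exact NNS_mul (h _ (Finset.mem_insert_self _ _))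
      (ih fun a ha => h a (Finset.mem_insert_of_mem ha))
lemma NNS_X : NNS (PowerSeries.X : PowerSeries (R n)) := fun k => by
  rw [PowerSeries.coeff_X]; split
  · exact NN_one
  · exact NN_zero
lemma NNS_C {a : R n} (ha : NN a) : NNS (PowerSeries.C (R := R n) a) := fun k => by
  rw [PowerSeries.coeff_C]; split
  · exact ha
  · exact NN_zero

lemma NNS_expPS {F : PowerSeries (R n)} (hF : NNS F) : NNS (expPS F) := fun k => by
  rw [expPS, PowerSeries.coeff_mk, map_sum]
  refine NN_sum fun jj _ => ?_
  rw [PowerSeries.coeff_smul]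
  exact NN_smul (by positivity) (NNS_pow hF jj k)

section Deriv
variable (i j : Fin n)

noncomputable def Dd : Derivation ℚ (R n) (R n) := pderiv i - pderiv j

lemma Dd_apply (p : R n) : Dd i j p = pderiv i p - pderiv j p := rfl

noncomputable def Ds : PowerSeries (R n) →ₗ[ℚ] PowerSeries (R n) where
  toFun f := PowerSeries.mk fun k => Dd i j (PowerSeries.coeff k f)
  map_add' f g := by
    ext k
    simp [PowerSeries.coeff_mk]
  map_smul' c f := by
    ext k
    simp [PowerSeries.coeff_mk, PowerSeries.coeff_smul]

lemma coeff_Ds (f : PowerSeries (R n)) (k : ℕ) :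
    PowerSeries.coeff k (Ds i j f) = Dd i j (PowerSeries.coeff k f) := by
  simp only [Ds, LinearMap.coe_mk, AddHom.coe_mk, PowerSeries.coeff_mk]

lemma Ds_mul (f g : PowerSeries (R n)) :
    Ds i j (f * g) = Ds i j f * g + f * Ds i j g := by
  refine PowerSeries.ext fun k => ?_
  rw [coeff_Ds, PowerSeries.coeff_mul, map_sum, map_add,
    PowerSeries.coeff_mul, PowerSeries.coeff_mul, ← Finset.sum_add_distrib]
  refine Finset.sum_congr rfl fun p _ => ?_
  rw [Derivation.leibniz, smul_eq_mul, smul_eq_mul, coeff_Ds, coeff_Ds]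
  ring

lemma Ds_one : Ds i j (1 : PowerSeries (R n)) = 0 := by
  refine PowerSeries.ext fun k => ?_
  rw [coeff_Ds, PowerSeries.coeff_one]
  split <;> simp

lemma Ds_pow_succ (f : PowerSeries (R n)) (m : ℕ) :
    Ds i j (f ^ (m + 1)) = (m + 1 : ℚ) • (f ^ m * Ds i j f) := by
  induction m with
  | zero => simp [Ds_mul]
  | succ m ih =>
    rw [pow_succ, Ds_mul, ih, smul_mul_assoc, mul_right_comm, ← pow_succ]
    push_cast
    module

lemma coeff_pow_eq_zero {F : PowerSeries (R n)} (h0 : PowerSeries.constantCoeff (R := R n) F = 0) :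
    ∀ m b, b < m → PowerSeries.coeff (R := R n) b (F ^ m) = 0 := by
  intro m
  induction m with
  | zero => intro b hb; omega
  | succ m ih =>
    intro b hb
    rw [pow_succ, PowerSeries.coeff_mul]
    refine Finset.sum_eq_zero fun p hp => ?_
    rw [Finset.HasAntidiagonal.mem_antidiagonal] at hp
    rcases Nat.eq_zero_or_pos p.2 with h2 | h2
    · have hF0 : PowerSeries.coeff (R := R n) p.2 F = 0 := by
        rw [h2, PowerSeries.coeff_zero_eq_constantCoeff]; exact h0
      rw [hF0, mul_zero]
    · rw [ih _ (by omega), zero_mul]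

lemma coeff_expPS_stable {F : PowerSeries (R n)}
    (h0 : PowerSeries.constantCoeff (R := R n) F = 0) {b K : ℕ} (hbK : b ≤ K) :
    PowerSeries.coeff (R := R n) b (expPS F)
      = PowerSeries.coeff (R := R n) b
          (∑ jj ∈ Finset.range (K + 1), ((Nat.factorial jj : ℚ))⁻¹ • F ^ jj) := by
  rw [expPS, PowerSeries.coeff_mk, map_sum, map_sum]
  refine Finset.sum_subset (Finset.range_subset_range.2 (by omega)) ?_
  intro jj hjj hnot
  rw [Finset.mem_range] at hjj
  rw [Finset.mem_range, not_lt] at hnot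
  rw [PowerSeries.coeff_smul, coeff_pow_eq_zero h0 _ _ (by omega), smul_zero]

lemma Ds_expPS {F : PowerSeries (R n)}
    (h0 : PowerSeries.constantCoeff (R := R n) F = 0) :
    Ds i j (expPS F) = Ds i j F * expPS F := by
  refine PowerSeries.ext fun k => ?_
  have hDsT : Ds i j (∑ jj ∈ Finset.range (k + 1), ((Nat.factorial jj : ℚ))⁻¹ • F ^ jj)
      = (∑ jj ∈ Finset.range k, ((Nat.factorial jj : ℚ))⁻¹ • F ^ jj) * Ds i j F := by
    rw [map_sum, Finset.sum_range_succ']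
    simp only [map_smul]
    rw [pow_zero, Ds_one, smul_zero, add_zero, Finset.sum_mul]
    refine Finset.sum_congr rfl fun jj hjj => ?_
    rw [Ds_pow_succ, smul_smul, smul_mul_assoc]
    congr 1
    have h1 : ((Nat.factorial jj : ℚ)) ≠ 0 := by
      exact_mod_cast (Nat.factorial_pos jj).ne'
    have h2 : ((jj : ℚ) + 1) ≠ 0 := by positivity
    rw [Nat.factorial_succ]
    push_cast
    field_simp
  have hek : PowerSeries.coeff (R := R n) k (expPS F)
      = PowerSeries.coeff (R := R n) k
          (∑ jj ∈ Finset.range (k + 1), ((Nat.factorial jj : ℚ))⁻¹ • F ^ jj) := by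
    rw [expPS, PowerSeries.coeff_mk]
  rw [coeff_Ds, hek, ← coeff_Ds, hDsT, mul_comm,
    PowerSeries.coeff_mul, PowerSeries.coeff_mul]
  refine Finset.sum_congr rfl fun p hp => ?_
  rw [Finset.HasAntidiagonal.mem_antidiagonal] at hp
  rcases Nat.eq_zero_or_pos p.1 with h1 | h1
  · have hz : PowerSeries.coeff (R := R n) p.1 (Ds i j F) = 0 := by
      rw [h1, coeff_Ds]
      have : PowerSeries.coeff (R := R n) 0 F = 0 := by
        rw [PowerSeries.coeff_zero_eq_constantCoeff]; exact h0
      rw [this, map_zero]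
    rw [hz, zero_mul, zero_mul]
  · congr 1
    have hb : p.2 ≤ k - 1 := by omega
    have hk : k - 1 + 1 = k := by omega
    rw [coeff_expPS_stable h0 hb, hk]

end Deriv

section hhsec
variable (i j : Fin n)

noncomputable def hh (d : ℕ) : R n :=
  ∑ a ∈ Finset.range d, X i ^ a * X j ^ (d - 1 - a)

lemma hh_zero : hh i j 0 = 0 := by simp [hh]
lemma hh_one : hh i j 1 = 1 := by simp [hh]

lemma NN_hh (d : ℕ) : NN (hh i j d) :=
  NN_sum fun a _ => NN_mul (NN_pow (NN_X i) a) (NN_pow (NN_X j) _)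

lemma hh_mul_sub (d : ℕ) : hh i j d * (X i - X j) = X i ^ d - X j ^ d :=
  geom_sum₂_mul _ _ d

lemma hh_succ_left (d : ℕ) : hh i j (d + 1) = X i * hh i j d + X j ^ d := by
  rw [hh, Finset.sum_range_succ', hh, Finset.mul_sum]
  congr 1
  · refine Finset.sum_congr rfl fun a _ => ?_
    have h : d + 1 - 1 - (a + 1) = d - 1 - a := by omega
    rw [h, pow_succ']
    ring
  · simp

lemma hh_succ_right (d : ℕ) : hh i j (d + 1) = X j * hh i j d + X i ^ d := by
  rw [hh, Finset.sum_range_succ, hh, Finset.mul_sum]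
  congr 1
  · refine Finset.sum_congr rfl fun a ha => ?_
    rw [Finset.mem_range] at ha
    have h : d + 1 - 1 - a = (d - 1 - a) + 1 := by omega
    rw [h, pow_succ']
    ring
  · simp

lemma hh_rec (d : ℕ) :
    hh i j (d + 1 + 1) = (X i + X j) * hh i j (d + 1) - X i * X j * hh i j d := by
  have h1 := hh_succ_left i j (d + 1)
  have h2 := hh_succ_left i j d
  have h3 := hh_succ_right i j (d + 1)
  -- (Xi+Xj) hh(d+1) - XiXj hh d = Xi hh(d+1) + Xj (hh(d+1) - Xi hh d) = Xi hh(d+1) + Xj^{d+1}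
  rw [h1]
  rw [h2]
  ring

end hhsec

lemma pow_sum_ge (m : ℕ) (hm : 1 ≤ m) :
    ∃ q : R n, NN q ∧ (∑ l : Fin n, (MvPolynomial.X l : R n)) ^ m
      = (∑ l : Fin n, (MvPolynomial.X l : R n) ^ m) + q := by
  induction m, hm using Nat.le_induction with
  | base => exact ⟨0, NN_zero, by simp⟩
  | succ m hm ih =>
    obtain ⟨q, hq, heq⟩ := ih
    refine ⟨(∑ l : Fin n, ∑ l' ∈ Finset.univ.erase l,
          (MvPolynomial.X l : R n) ^ m * MvPolynomial.X l')
        + q * (∑ l : Fin n, (MvPolynomial.X l : R n)), ?_, ?_⟩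
    · exact NN_add
        (NN_sum fun l _ => NN_sum fun l' _ => NN_mul (NN_pow (NN_X l) m) (NN_X l'))
        (NN_mul hq (NN_sum fun l _ => NN_X l))
    · have hterm : ∀ l : Fin n, (MvPolynomial.X l : R n) ^ m
            * (∑ l' : Fin n, (MvPolynomial.X l' : R n))
          = MvPolynomial.X l ^ (m + 1)
            + ∑ l' ∈ Finset.univ.erase l, (MvPolynomial.X l : R n) ^ m * MvPolynomial.X l' := by
        intro l
        rw [Finset.mul_sum, ← Finset.add_sum_erase _ _ (Finset.mem_univ l), pow_succ]
      have hsum : (∑ l : Fin n, (MvPolynomial.X l : R n) ^ m)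
            * (∑ l' : Fin n, (MvPolynomial.X l' : R n))
          = ∑ l : Fin n, (MvPolynomial.X l ^ (m + 1)
            + ∑ l' ∈ Finset.univ.erase l, (MvPolynomial.X l : R n) ^ m * MvPolynomial.X l') := by
        rw [Finset.sum_mul]
        exact Finset.sum_congr rfl fun l _ => hterm l
      rw [pow_succ, heq, add_mul, hsum, Finset.sum_add_distrib]
      ring

/-- The exponent series of `gSeries`. -/
noncomputable def Fser (n r : ℕ) : PowerSeries (MvPolynomial (Fin n) ℚ) :=
  PowerSeries.mk fun m =>
      if 1 ≤ m ∧ m ≤ r then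
        (-((-1 : ℚ) ^ (m - 1) * (m : ℚ)⁻¹)) • ∑ i, MvPolynomial.X i ^ m
          + (if Odd m then ((m : ℚ)⁻¹) • (∑ i, MvPolynomial.X i) ^ m else 0)
      else 0

lemma gSeries_eq (n r : ℕ) :
    gSeries n r = (∏ l, (1 + PowerSeries.C (R := R n) (MvPolynomial.X l) * PowerSeries.X))
      * expPS (Fser n r) := rfl

lemma Fser_const (r : ℕ) : PowerSeries.constantCoeff (R := R n) (Fser n r) = 0 := by
  rw [← PowerSeries.coeff_zero_eq_constantCoeff, Fser, PowerSeries.coeff_mk]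
  norm_num

lemma NNS_Fser (r : ℕ) : NNS (Fser n r) := by
  intro m
  rw [Fser, PowerSeries.coeff_mk]
  by_cases h : 1 ≤ m ∧ m ≤ r
  · rw [if_pos h]
    by_cases ho : Odd m
    · rw [if_pos ho]
      obtain ⟨q, hq, heq⟩ := pow_sum_ge (n := n) m h.1
      have hc : (-((-1 : ℚ) ^ (m - 1) * (m : ℚ)⁻¹)) = -(m : ℚ)⁻¹ := by
        have he : Even (m - 1) := Nat.Odd.sub_odd ho odd_one
        rw [he.neg_one_pow, one_mul]
      have hEq : (-((-1 : ℚ) ^ (m - 1) * (m : ℚ)⁻¹)) • (∑ l : Fin n, (MvPolynomial.X l : R n) ^ m)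
            + (m : ℚ)⁻¹ • ((∑ l : Fin n, (MvPolynomial.X l : R n)) ^ m)
          = (m : ℚ)⁻¹ • q := by
        rw [hc, heq, smul_add]
        module
      rw [hEq]
      exact NN_smul (by positivity) hq
    · rw [if_neg ho, add_zero]
      have hodd : Odd (m - 1) := Nat.Even.sub_odd h.1 (Nat.not_odd_iff_even.mp ho) odd_one
      have hc : (-((-1 : ℚ) ^ (m - 1) * (m : ℚ)⁻¹)) = (m : ℚ)⁻¹ := by
        rw [hodd.neg_one_pow]; ring
      rw [hc]
      exact NN_smul (by positivity) (NN_sum fun l _ => NN_pow (NN_X l) m)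
  · rw [if_neg h]; exact NN_zero

section Main
variable (i j : Fin n)

lemma smul_neg_one_pow (k : ℕ) (z : R n) : ((-1 : ℚ) ^ k) • z = (-1 : R n) ^ k * z := by
  rw [Algebra.smul_def, map_pow, map_neg, map_one]

lemma Dd_X_self (hij : i ≠ j) : Dd i j (MvPolynomial.X i) = 1 := by
  rw [Dd_apply, pderiv_X_self, pderiv_X_of_ne hij, sub_zero]

lemma Dd_X_other (hij : i ≠ j) : Dd i j (MvPolynomial.X j) = -1 := by
  rw [Dd_apply, pderiv_X_self, pderiv_X_of_ne hij.symm, zero_sub]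

lemma Dd_X_ne {l : Fin n} (hli : l ≠ i) (hlj : l ≠ j) : Dd i j (MvPolynomial.X l) = 0 := by
  rw [Dd_apply, pderiv_X_of_ne hli, pderiv_X_of_ne hlj, sub_zero]

lemma pderiv_psum (a : Fin n) (m : ℕ) :
    pderiv a (∑ l : Fin n, (MvPolynomial.X l : R n) ^ m)
      = m • (MvPolynomial.X a : R n) ^ (m - 1) := by
  rw [map_sum]
  rw [Finset.sum_eq_single a]
  · rw [Derivation.leibniz_pow, pderiv_X_self, smul_eq_mul, mul_one]
  · intro l _ hl
    rw [Derivation.leibniz_pow, pderiv_X_of_ne hl, smul_zero, smul_zero]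
  · intro h; exact absurd (Finset.mem_univ a) h

lemma pderiv_p1 (a : Fin n) :
    pderiv a (∑ l : Fin n, (MvPolynomial.X l : R n)) = 1 := by
  rw [map_sum, Finset.sum_eq_single a]
  · exact pderiv_X_self a
  · intro l _ hl; exact pderiv_X_of_ne hl
  · intro h; exact absurd (Finset.mem_univ a) h

lemma Dd_p1_pow (m : ℕ) :
    Dd i j ((∑ l : Fin n, (MvPolynomial.X l : R n)) ^ m) = 0 := by
  rw [Derivation.leibniz_pow]
  rw [Dd_apply, pderiv_p1, pderiv_p1, sub_self, smul_zero, smul_zero]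

noncomputable def DFexp (r : ℕ) : PowerSeries (R n) :=
  ∑ m ∈ Finset.range r, (-1 : PowerSeries (R n)) ^ (m + 1) *
    (PowerSeries.C (R := R n) (MvPolynomial.X i ^ m - MvPolynomial.X j ^ m)
      * PowerSeries.X ^ (m + 1))

lemma coeff_DFexp (r k : ℕ) :
    PowerSeries.coeff (R := R n) k (DFexp i j r)
      = if 1 ≤ k ∧ k ≤ r then
          (-1 : R n) ^ k * (MvPolynomial.X i ^ (k - 1) - MvPolynomial.X j ^ (k - 1))
        else 0 := by
  rw [DFexp, map_sum]
  have hterm : ∀ m, PowerSeries.coeff (R := R n) k ((-1 : PowerSeries (R n)) ^ (m + 1) *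
      (PowerSeries.C (R := R n) (MvPolynomial.X i ^ m - MvPolynomial.X j ^ m)
        * PowerSeries.X ^ (m + 1)))
      = if k = m + 1 then
          (-1 : R n) ^ (m + 1) * (MvPolynomial.X i ^ m - MvPolynomial.X j ^ m)
        else 0 := by
    intro m
    have hC : ((-1 : PowerSeries (R n)) ^ (m + 1))
        = PowerSeries.C (R := R n) ((-1 : R n) ^ (m + 1)) := by
      rw [map_pow, map_neg, map_one]
    rw [hC, ← mul_assoc, ← map_mul, PowerSeries.coeff_C_mul, PowerSeries.coeff_X_pow]
    split <;> simp
  rw [Finset.sum_congr rfl fun m _ => hterm m]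
  by_cases hk : 1 ≤ k ∧ k ≤ r
  · rw [if_pos hk, Finset.sum_eq_single (k - 1)]
    · rw [if_pos (by omega), show k - 1 + 1 = k by omega]
    · intro m _ hm; rw [if_neg (by omega)]
    · intro h; exact absurd (Finset.mem_range.2 (by omega)) h
  · rw [if_neg hk]
    refine Finset.sum_eq_zero fun m hm => ?_
    rw [Finset.mem_range] at hm
    rw [if_neg (by omega)]

lemma Ds_Fser (hij : i ≠ j) (r : ℕ) : Ds i j (Fser n r) = DFexp i j r := by
  refine PowerSeries.ext fun k => ?_
  rw [coeff_Ds, Fser, PowerSeries.coeff_mk, coeff_DFexp]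
  by_cases hk : 1 ≤ k ∧ k ≤ r
  · rw [if_pos hk, if_pos hk, map_add]
    have h2 : Dd i j (if Odd k then ((k : ℚ)⁻¹) • (∑ l : Fin n, (MvPolynomial.X l : R n)) ^ k
        else 0) = 0 := by
      split
      · rw [Derivation.map_smul, Dd_p1_pow, smul_zero]
      · exact map_zero _
    rw [h2, add_zero, Derivation.map_smul, Dd_apply, pderiv_psum, pderiv_psum]
    have hns : ∀ z : R n, k • z = (k : ℚ) • z := fun z => (Nat.cast_smul_eq_nsmul ℚ k z).symm
    rw [hns, hns, ← smul_sub, smul_smul]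
    have hc : (-((-1 : ℚ) ^ (k - 1) * (k : ℚ)⁻¹)) * (k : ℚ) = (-1 : ℚ) ^ k := by
      obtain ⟨k', rfl⟩ : ∃ k', k = k' + 1 := ⟨k - 1, by omega⟩
      have hks : ((k' : ℚ) + 1) ≠ 0 := by positivity
      rw [pow_succ]
      simp only [Nat.add_sub_cancel]
      push_cast
      field_simp
    rw [hc, smul_neg_one_pow]
  · rw [if_neg hk, if_neg hk, map_zero]

lemma Wkey (r : ℕ) (hr : 1 ≤ r) :
    -(PowerSeries.C (R := R n) (MvPolynomial.X i - MvPolynomial.X j)) * PowerSeries.X ^ 2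
      + ((1 + PowerSeries.C (R := R n) (MvPolynomial.X i) * PowerSeries.X)
          * (1 + PowerSeries.C (R := R n) (MvPolynomial.X j) * PowerSeries.X)) * DFexp i j r
    = (-1 : PowerSeries (R n)) ^ r *
        (PowerSeries.C (R := R n) (MvPolynomial.X i - MvPolynomial.X j)
          * PowerSeries.X ^ (r + 1)
          * (PowerSeries.C (R := R n) (hh i j r)
            + PowerSeries.X * PowerSeries.C (R := R n)
                (MvPolynomial.X i * MvPolynomial.X j * hh i j (r - 1)))) := by
  induction r, hr using Nat.le_induction with
  | base =>
    simp [DFexp, hh_one, hh_zero]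
    ring
  | succ r hr ih =>
    obtain ⟨d, rfl⟩ : ∃ d, r = d + 1 := ⟨r - 1, by omega⟩
    simp only [Nat.add_sub_cancel] at ih ⊢
    rw [DFexp, Finset.sum_range_succ, ← DFexp]
    rw [hh_rec i j d, ← hh_mul_sub i j (d + 1)]
    simp only [map_sub, map_mul, map_add] at ih ⊢
    linear_combination ih

lemma Ds_lin (a : R n) :
    Ds i j (1 + PowerSeries.C (R := R n) a * PowerSeries.X)
      = PowerSeries.C (R := R n) (Dd i j a) * PowerSeries.X := by
  refine PowerSeries.ext fun k => ?_
  rw [coeff_Ds, map_add, PowerSeries.coeff_one, PowerSeries.coeff_C_mul,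
    PowerSeries.coeff_C_mul, PowerSeries.coeff_X]
  rcases k with _ | _ | k <;>
    simp [map_add, Derivation.map_one_eq_zero]

lemma Ds_P2 (hij : i ≠ j) :
    Ds i j (∏ l ∈ (Finset.univ.erase i).erase j,
      (1 + PowerSeries.C (R := R n) (MvPolynomial.X l) * PowerSeries.X)) = 0 := by
  refine Finset.prod_induction _ (fun g => Ds i j g = 0) ?_ ?_ ?_
  · intro a b ha hb; rw [Ds_mul, ha, hb]; simp
  · exact Ds_one i j
  · intro l hl
    simp only [Finset.mem_erase, Finset.mem_univ, and_true] at hl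
    rw [Ds_lin, Dd_X_ne i j hl.2 hl.1, map_zero, zero_mul]

lemma Ds_gSeries (hij : i ≠ j) (r : ℕ) (hr : 1 ≤ r) :
    Ds i j (gSeries n r)
      = (-1 : PowerSeries (R n)) ^ r *
        (PowerSeries.C (R := R n) (MvPolynomial.X i - MvPolynomial.X j) *
          (PowerSeries.X ^ (r + 1)
            * (PowerSeries.C (R := R n) (hh i j r)
              + PowerSeries.X * PowerSeries.C (R := R n)
                  (MvPolynomial.X i * MvPolynomial.X j * hh i j (r - 1)))
            * (∏ l ∈ (Finset.univ.erase i).erase j,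
                (1 + PowerSeries.C (R := R n) (MvPolynomial.X l) * PowerSeries.X))
            * expPS (Fser n r))) := by
  have hprod : (∏ l, (1 + PowerSeries.C (R := R n) (MvPolynomial.X l) * PowerSeries.X))
      = (1 + PowerSeries.C (R := R n) (MvPolynomial.X i) * PowerSeries.X)
        * ((1 + PowerSeries.C (R := R n) (MvPolynomial.X j) * PowerSeries.X)
          * ∏ l ∈ (Finset.univ.erase i).erase j,
              (1 + PowerSeries.C (R := R n) (MvPolynomial.X l) * PowerSeries.X)) := by
    rw [← Finset.mul_prod_erase Finset.univ _ (Finset.mem_univ i),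
      ← Finset.mul_prod_erase _ _ (Finset.mem_erase.2 ⟨hij.symm, Finset.mem_univ j⟩)]
  rw [gSeries_eq, hprod]
  rw [Ds_mul, Ds_expPS i j (Fser_const r), Ds_Fser i j hij r, Ds_mul, Ds_mul,
    Ds_P2 i j hij, Ds_lin, Ds_lin, Dd_X_self i j hij, Dd_X_other i j hij,
    map_one, map_neg, map_one]
  have key := Wkey i j r hr
  simp only [map_sub, map_mul] at key ⊢
  linear_combination ((∏ l ∈ (Finset.univ.erase i).erase j,
      (1 + PowerSeries.C (R := R n) (MvPolynomial.X l) * PowerSeries.X))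
    * expPS (Fser n r)) * key

end Main
end S9

theorem stmt_9 (r n k : ℕ) (hr : 1 ≤ r) (hn : 2 ≤ n) (hk : 1 ≤ k)
    (i j : Fin n) (hij : i ≠ j) :
    ∃ γ : MvPolynomial (Fin n) ℚ,
      (∀ m : (Fin n) →₀ ℕ, 0 ≤ MvPolynomial.coeff m γ) ∧
      ((-1 : ℚ) ^ r) •
          (MvPolynomial.pderiv i (Gpoly n r k) - MvPolynomial.pderiv j (Gpoly n r k))
        = (MvPolynomial.X i - MvPolynomial.X j) * γ ∧
      ∀ x : Fin n → ℝ, (∀ l, 0 ≤ x l) →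
        0 ≤ (x i - x j) *
          ((-1 : ℝ) ^ r *
            (MvPolynomial.aeval x (MvPolynomial.pderiv i (Gpoly n r k)) -
              MvPolynomial.aeval x (MvPolynomial.pderiv j (Gpoly n r k)))) := by
  classical
  set M : PowerSeries (S9.R n) :=
    PowerSeries.X ^ (r + 1)
      * (PowerSeries.C (R := S9.R n) (S9.hh i j r)
        + PowerSeries.X * PowerSeries.C (R := S9.R n)
            (MvPolynomial.X i * MvPolynomial.X j * S9.hh i j (r - 1)))
      * (∏ l ∈ (Finset.univ.erase i).erase j,
          (1 + PowerSeries.C (R := S9.R n) (MvPolynomial.X l) * PowerSeries.X))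
      * expPS (S9.Fser n r) with hM
  have hNNS : S9.NNS M := by
    refine S9.NNS_mul (S9.NNS_mul (S9.NNS_mul ?_ ?_) ?_) ?_
    · exact S9.NNS_pow S9.NNS_X _
    · exact S9.NNS_add (S9.NNS_C (S9.NN_hh i j r))
        (S9.NNS_mul S9.NNS_X (S9.NNS_C
          (S9.NN_mul (S9.NN_mul (S9.NN_X i) (S9.NN_X j)) (S9.NN_hh i j _))))
    · exact S9.NNS_prod fun l _ =>
        S9.NNS_add S9.NNS_one (S9.NNS_mul (S9.NNS_C (S9.NN_X l)) S9.NNS_X)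
    · exact S9.NNS_expPS (S9.NNS_Fser r)
  have hid : ((-1 : ℚ) ^ r) •
          (MvPolynomial.pderiv i (Gpoly n r k) - MvPolynomial.pderiv j (Gpoly n r k))
        = (MvPolynomial.X i - MvPolynomial.X j) * PowerSeries.coeff (R := S9.R n) k M := by
    have h1 : MvPolynomial.pderiv i (Gpoly n r k) - MvPolynomial.pderiv j (Gpoly n r k)
        = S9.Dd i j (Gpoly n r k) := (S9.Dd_apply i j _).symm
    have h2 : S9.Dd i j (PowerSeries.coeff (R := S9.R n) k (gSeries n r))
        = PowerSeries.coeff (R := S9.R n) k (S9.Ds i j (gSeries n r)) := (S9.coeff_Ds i j _ k).symm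
    rw [h1, Gpoly, h2, S9.Ds_gSeries i j hij r hr]
    have h3 : (-1 : PowerSeries (S9.R n)) ^ r *
          (PowerSeries.C (R := S9.R n) (MvPolynomial.X i - MvPolynomial.X j) * M)
        = PowerSeries.C (R := S9.R n)
            ((-1 : S9.R n) ^ r * (MvPolynomial.X i - MvPolynomial.X j)) * M := by
      rw [map_mul, map_pow, map_neg, map_one, mul_assoc]
    rw [h3, PowerSeries.coeff_C_mul, S9.smul_neg_one_pow]
    have h4 : (-1 : S9.R n) ^ r * (-1 : S9.R n) ^ r = 1 := by
      rw [← pow_add, ← two_mul, pow_mul]; norm_num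
    linear_combination ((MvPolynomial.X i - MvPolynomial.X j)
      * PowerSeries.coeff (R := S9.R n) k M) * h4
  refine ⟨PowerSeries.coeff (R := S9.R n) k M, hNNS k, hid, ?_⟩
  intro x hx
  have hpos : 0 ≤ MvPolynomial.aeval x (PowerSeries.coeff (R := S9.R n) k M) :=
    S9.NN_aeval_nonneg (hNNS k) hx
  have key : (-1 : ℝ) ^ r *
        (MvPolynomial.aeval x (MvPolynomial.pderiv i (Gpoly n r k)) -
          MvPolynomial.aeval x (MvPolynomial.pderiv j (Gpoly n r k)))
      = (x i - x j) * MvPolynomial.aeval x (PowerSeries.coeff (R := S9.R n) k M) := by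
    have hvals := congrArg (MvPolynomial.aeval x) hid
    rw [map_smul, map_sub, map_mul, map_sub, MvPolynomial.aeval_X, MvPolynomial.aeval_X,
      Rat.smul_def] at hvals
    push_cast at hvals
    exact hvals
  rw [key]
  have h2 : (x i - x j) * ((x i - x j) * MvPolynomial.aeval x (PowerSeries.coeff (R := S9.R n) k M))
      = (x i - x j) ^ 2 * MvPolynomial.aeval x (PowerSeries.coeff (R := S9.R n) k M) := by ring
  rw [h2]
  exact mul_nonneg (sq_nonneg _) hpos
end

section
/- Fix integers r ≥ 1, n ≥ 2, k ≥ 1, and indices i ≠ j in {1,…,n}. Then there exists a polynomial δ in x_1,…,x_n with nonnegative rational coefficients such that, as polynomials, ∂H_{k,r}/∂x_i − ∂H_{k,r}/∂x_j = −(x_i − x_j) · δ. In particular, for all x ∈ [0,∞)^n one has (x_i − x_j) · (∂H_{k,r}/∂x_i(x) − ∂H_{k,r}/∂x_j(x)) ≤ 0, i.e. H_{k,r} satisfies the Schur–Ostrowski criterion for Schur concavity on [0,∞)^n. -/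
open scoped BigOperators

/-- The generating function
`h_r(x,t) = (Π_i (1 + x_i^r t)) · exp(((Σ_i x_i)^r - Σ_i x_i^r) t)`,
as a formal power series in `t` over `ℚ[x_1,…,x_n]`. -/
noncomputable def hSeries (n r : ℕ) : PowerSeries (MvPolynomial (Fin n) ℚ) :=
  (∏ i, (1 + PowerSeries.C (R := MvPolynomial (Fin n) ℚ) (MvPolynomial.X i ^ r) * PowerSeries.X)) *
    expPS (PowerSeries.C (R := MvPolynomial (Fin n) ℚ)
        ((∑ i, MvPolynomial.X i) ^ r - ∑ i, MvPolynomial.X i ^ r) * PowerSeries.X)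

/-- `H_{k,r}` as a polynomial in `x_1,…,x_n` over `ℚ`: the coefficient of `t^k` in
`h_r(x,t)`. -/
noncomputable def Hpoly (n r k : ℕ) : MvPolynomial (Fin n) ℚ :=
  PowerSeries.coeff (R := _) k (hSeries n r)

/-- `H_{k,r}(x)` for a real vector `x`. -/
noncomputable def HReal {n : ℕ} (r k : ℕ) (x : Fin n → ℝ) : ℝ :=
  MvPolynomial.aeval x (Hpoly n r k)

section NNsec
open MvPolynomial
variable {n : ℕ}
open MvPolynomial

variable {n : ℕ}

/-- A polynomial has all coefficients nonnegative. -/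
def NN {n : ℕ} (p : MvPolynomial (Fin n) ℚ) : Prop := ∀ m, 0 ≤ MvPolynomial.coeff m p

lemma NN.add {p q : MvPolynomial (Fin n) ℚ} (hp : NN p) (hq : NN q) : NN (p + q) := by
  intro m; rw [coeff_add]; exact add_nonneg (hp m) (hq m)

lemma NN.mul {p q : MvPolynomial (Fin n) ℚ} (hp : NN p) (hq : NN q) : NN (p * q) := by
  intro m; rw [coeff_mul]
  exact Finset.sum_nonneg fun x _ => mul_nonneg (hp _) (hq _)

lemma NN.zero : NN (0 : MvPolynomial (Fin n) ℚ) := fun m => le_of_eq (coeff_zero m).symm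

lemma NN.one : NN (1 : MvPolynomial (Fin n) ℚ) := by
  intro m
  rcases eq_or_ne m 0 with h | h
  · simp [h]
  · simp [coeff_one, Ne.symm h]

lemma NN.X (i : Fin n) : NN (MvPolynomial.X i : MvPolynomial (Fin n) ℚ) := by
  intro m
  rcases eq_or_ne m (Finsupp.single i 1) with h | h
  · simp [MvPolynomial.coeff_X', h]
  · simp [MvPolynomial.coeff_X', Ne.symm h]

lemma NN.sum {α : Type*} (s : Finset α) (f : α → MvPolynomial (Fin n) ℚ)
    (h : ∀ a ∈ s, NN (f a)) : NN (∑ a ∈ s, f a) := by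
  classical
  induction s using Finset.induction_on with
  | empty => simpa using NN.zero
  | insert _ _ hx ih =>
      rw [Finset.sum_insert hx]
      exact (h _ (Finset.mem_insert_self _ _)).add
        (ih fun a ha => h a (Finset.mem_insert_of_mem ha))

lemma NN.prod {α : Type*} (s : Finset α) (f : α → MvPolynomial (Fin n) ℚ)
    (h : ∀ a ∈ s, NN (f a)) : NN (∏ a ∈ s, f a) := by
  classical
  induction s using Finset.induction_on with
  | empty => simpa using NN.one
  | insert _ _ hx ih =>
      rw [Finset.prod_insert hx]
      exact (h _ (Finset.mem_insert_self _ _)).mul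
        (ih fun a ha => h a (Finset.mem_insert_of_mem ha))

lemma NN.pow {p : MvPolynomial (Fin n) ℚ} (hp : NN p) (k : ℕ) : NN (p ^ k) := by
  induction k with
  | zero => simpa using NN.one
  | succ k ih => rw [pow_succ]; exact ih.mul hp

lemma NN.smul {p : MvPolynomial (Fin n) ℚ} (hp : NN p) {c : ℚ} (hc : 0 ≤ c) : NN (c • p) := by
  intro m; rw [MvPolynomial.coeff_smul]; exact mul_nonneg hc (hp m)

lemma NN.natCast (k : ℕ) : NN ((k : MvPolynomial (Fin n) ℚ)) := by
  induction k with
  | zero => simpa using NN.zero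
  | succ k ih => push_cast; exact ih.add NN.one

/-- The key positivity: `(Σ X_i)^r − Σ X_i^r` has nonnegative coefficients. -/
lemma NN_a (r : ℕ) (hr : 1 ≤ r) :
    NN ((∑ i, MvPolynomial.X i) ^ r - ∑ i, (MvPolynomial.X i : MvPolynomial (Fin n) ℚ) ^ r) := by
  induction r, hr using Nat.le_induction with
  | base => simpa using NN.zero
  | succ r hr ih =>
      have key : (∑ i, MvPolynomial.X i) ^ (r + 1)
            - ∑ i, (MvPolynomial.X i : MvPolynomial (Fin n) ℚ) ^ (r + 1)
          = (∑ i, MvPolynomial.X i) *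
              ((∑ i, MvPolynomial.X i) ^ r - ∑ i, (MvPolynomial.X i : MvPolynomial (Fin n) ℚ) ^ r)
            + ∑ m : Fin n, (∑ l ∈ Finset.univ.erase m, MvPolynomial.X l) *
                (MvPolynomial.X m : MvPolynomial (Fin n) ℚ) ^ r := by
        have h1 : ∀ m : Fin n, (∑ l ∈ Finset.univ.erase m, (MvPolynomial.X l : MvPolynomial (Fin n) ℚ))
            = (∑ l, MvPolynomial.X l) - MvPolynomial.X m := by
          intro m
          rw [eq_sub_iff_add_eq, Finset.sum_erase_add]
          exact Finset.mem_univ m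
        simp only [h1, sub_mul, Finset.sum_sub_distrib, ← Finset.mul_sum, ← pow_succ']
        ring
      rw [key]
      refine ((NN.sum _ _ fun i _ => NN.X i).mul ih).add ?_
      exact NN.sum _ _ fun m _ =>
        (NN.sum _ _ fun l _ => NN.X l).mul ((NN.X m).pow r)

end NNsec

section PSsec
open PowerSeries
variable {R : Type*} [CommRing R] [Algebra ℚ R]

/-- `E a = Σ_k a^k/k! t^k`. -/
noncomputable def E {R : Type*} [CommRing R] [Algebra ℚ R] (a : R) : PowerSeries R :=
  PowerSeries.mk fun k => (Nat.factorial k : ℚ)⁻¹ • a ^ k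

lemma expPS_CX (a : R) :
    expPS (PowerSeries.C (R := R) a * PowerSeries.X) = E a := by
  ext k
  rw [expPS, E, PowerSeries.coeff_mk, PowerSeries.coeff_mk, map_sum]
  have h : ∀ j : ℕ, (PowerSeries.coeff (R := R) k) ((Nat.factorial j : ℚ)⁻¹ • (PowerSeries.C (R := R) a * PowerSeries.X) ^ j)
      = if j = k then (Nat.factorial k : ℚ)⁻¹ • a ^ k else 0 := by
    intro j
    rw [PowerSeries.coeff_smul, mul_pow, ← map_pow, PowerSeries.coeff_C_mul,
      PowerSeries.coeff_X_pow]
    by_cases h : j = k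
    · subst h; simp
    · simp [h, Ne.symm h]
  rw [Finset.sum_congr rfl fun j _ => h j, Finset.sum_ite_eq' (Finset.range (k+1)) k]
  simp

/-- Apply a derivation coefficientwise to a power series. -/
noncomputable def Dhat (d : Derivation ℚ R R) (F : PowerSeries R) : PowerSeries R :=
  PowerSeries.mk fun k => d (PowerSeries.coeff (R := R) k F)

@[simp] lemma coeff_Dhat (d : Derivation ℚ R R) (F : PowerSeries R) (k : ℕ) :
    PowerSeries.coeff (R := R) k (Dhat d F) = d (PowerSeries.coeff (R := R) k F) :=
  PowerSeries.coeff_mk _ _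

lemma Dhat_mul (d : Derivation ℚ R R) (F G : PowerSeries R) :
    Dhat d (F * G) = Dhat d F * G + F * Dhat d G := by
  ext k
  rw [map_add, coeff_Dhat, PowerSeries.coeff_mul, PowerSeries.coeff_mul, PowerSeries.coeff_mul,
    map_sum, ← Finset.sum_add_distrib]
  refine Finset.sum_congr rfl fun p _ => ?_
  rw [d.leibniz, coeff_Dhat, coeff_Dhat]
  simp [smul_eq_mul]
  ring

@[simp] lemma Dhat_C (d : Derivation ℚ R R) (a : R) :
    Dhat d (PowerSeries.C (R := R) a) = PowerSeries.C (R := R) (d a) := by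
  ext k
  rw [coeff_Dhat]
  rcases eq_or_ne k 0 with h | h
  · simp [h]
  · simp [PowerSeries.coeff_C, h]

@[simp] lemma Dhat_one (d : Derivation ℚ R R) : Dhat d 1 = 0 := by
  have := Dhat_C d 1
  simpa using this

@[simp] lemma Dhat_X (d : Derivation ℚ R R) : Dhat d (PowerSeries.X : PowerSeries R) = 0 := by
  ext k
  rw [coeff_Dhat, PowerSeries.coeff_X]
  split_ifs <;> simp

lemma Dhat_add (d : Derivation ℚ R R) (F G : PowerSeries R) :
    Dhat d (F + G) = Dhat d F + Dhat d G := by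
  ext k; simp

lemma Dhat_CX (d : Derivation ℚ R R) (a : R) :
    Dhat d (PowerSeries.C (R := R) a * PowerSeries.X) = PowerSeries.C (R := R) (d a) * PowerSeries.X := by
  rw [Dhat_mul, Dhat_C, Dhat_X]
  simp

lemma Dhat_prod {α : Type*} [DecidableEq α] (d : Derivation ℚ R R) (s : Finset α)
    (f : α → PowerSeries R) :
    Dhat d (∏ a ∈ s, f a) = ∑ a ∈ s, Dhat d (f a) * ∏ b ∈ s.erase a, f b := by
  induction s using Finset.induction_on with
  | empty => simp
  | @insert x s hx ih =>
      rw [Finset.prod_insert hx, Dhat_mul, ih, Finset.sum_insert hx, Finset.erase_insert hx]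
      congr 1
      rw [Finset.mul_sum]
      refine Finset.sum_congr rfl fun a ha => ?_
      have hax : a ≠ x := fun h => hx (h ▸ ha)
      rw [Finset.erase_insert_of_ne hax.symm, Finset.prod_insert (fun h => hx (Finset.mem_of_mem_erase h))]
      ring

lemma Dhat_E (d : Derivation ℚ R R) (a : R) :
    Dhat d (E a) = PowerSeries.C (R := R) (d a) * (PowerSeries.X * E a) := by
  ext k
  rw [coeff_Dhat, PowerSeries.coeff_C_mul]
  cases k with
  | zero =>
      simp [E, PowerSeries.coeff_mk]
  | succ m =>
      rw [PowerSeries.coeff_succ_X_mul]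
      simp only [E, PowerSeries.coeff_mk]
      rw [d.map_smul, Derivation.leibniz_pow]
      simp only [Nat.succ_sub_one, smul_eq_mul]
      rw [← Nat.cast_smul_eq_nsmul ℚ, smul_smul, mul_smul_comm]
      congr 1
      · rw [Nat.factorial_succ]
        have h1 : (Nat.factorial m : ℚ) ≠ 0 := Nat.cast_ne_zero.2 (Nat.factorial_ne_zero m)
        have h2 : ((m : ℚ) + 1) ≠ 0 := by positivity
        push_cast
        field_simp
      · ring

/-- Coefficientwise nonnegativity for a power series over `MvPolynomial (Fin n) ℚ`. -/
def NNps {n : ℕ} (F : PowerSeries (MvPolynomial (Fin n) ℚ)) : Prop :=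
  ∀ k, NN (PowerSeries.coeff (R := _) k F)

lemma NNps.mul {n : ℕ} {F G : PowerSeries (MvPolynomial (Fin n) ℚ)} (hF : NNps F) (hG : NNps G) :
    NNps (F * G) := by
  intro k
  rw [PowerSeries.coeff_mul]
  exact NN.sum _ _ fun p _ => (hF _).mul (hG _)

lemma NNps.C {n : ℕ} {p : MvPolynomial (Fin n) ℚ} (hp : NN p) :
    NNps (PowerSeries.C (R := _) p) := by
  intro k
  rcases eq_or_ne k 0 with h | h
  · simpa [h] using hp
  · simpa [PowerSeries.coeff_C, h] using (NN.zero (n := n))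

lemma NNps.X {n : ℕ} : NNps (PowerSeries.X : PowerSeries (MvPolynomial (Fin n) ℚ)) := by
  intro k
  rw [PowerSeries.coeff_X]
  split_ifs
  · exact NN.one
  · exact NN.zero

lemma NNps.one {n : ℕ} : NNps (1 : PowerSeries (MvPolynomial (Fin n) ℚ)) := by
  intro k
  rcases eq_or_ne k 0 with h | h
  · simpa [h] using (NN.one (n := n))
  · simpa [PowerSeries.coeff_one, h] using (NN.zero (n := n))

lemma NNps.add {n : ℕ} {F G : PowerSeries (MvPolynomial (Fin n) ℚ)} (hF : NNps F) (hG : NNps G) :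
    NNps (F + G) := fun k => by rw [map_add]; exact (hF k).add (hG k)

lemma NNps.prod {n : ℕ} {α : Type*} (s : Finset α) (f : α → PowerSeries (MvPolynomial (Fin n) ℚ))
    (h : ∀ a ∈ s, NNps (f a)) : NNps (∏ a ∈ s, f a) := by
  classical
  induction s using Finset.induction_on with
  | empty => simpa using NNps.one
  | insert _ _ hx ih =>
      rw [Finset.prod_insert hx]
      exact (h _ (Finset.mem_insert_self _ _)).mul
        (ih fun a ha => h a (Finset.mem_insert_of_mem ha))

lemma NNps.pow {n : ℕ} {F : PowerSeries (MvPolynomial (Fin n) ℚ)} (hF : NNps F) (k : ℕ) :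
    NNps (F ^ k) := by
  induction k with
  | zero => simpa using NNps.one
  | succ k ih => rw [pow_succ]; exact ih.mul hF

lemma NNps.E {n : ℕ} {a : MvPolynomial (Fin n) ℚ} (ha : NN a) : NNps (_root_.E a) := by
  intro k
  have h : (PowerSeries.coeff (R := _) k) (_root_.E a) = (Nat.factorial k : ℚ)⁻¹ • a ^ k :=
    PowerSeries.coeff_mk _ _
  rw [h]
  exact (ha.pow k).smul (by positivity)

end PSsec

set_option maxHeartbeats 1000000 in
lemma main_identity (r n : ℕ) (hr : 1 ≤ r) (i j : Fin n) (hij : i ≠ j) :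
    ∃ W : PowerSeries (MvPolynomial (Fin n) ℚ), NNps W ∧
      Dhat (MvPolynomial.pderiv i - MvPolynomial.pderiv j) (hSeries n r)
        = PowerSeries.C (R := _) (-(MvPolynomial.X i - MvPolynomial.X j)) * W := by
  classical
  obtain ⟨s, rfl⟩ : ∃ s, r = s + 1 := ⟨r - 1, by omega⟩
  set u : MvPolynomial (Fin n) ℚ := MvPolynomial.X i with hu
  set v : MvPolynomial (Fin n) ℚ := MvPolynomial.X j with hv
  set D : Derivation ℚ (MvPolynomial (Fin n) ℚ) (MvPolynomial (Fin n) ℚ) :=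
    MvPolynomial.pderiv i - MvPolynomial.pderiv j with hD
  set f : Fin n → PowerSeries (MvPolynomial (Fin n) ℚ) :=
    fun m => 1 + PowerSeries.C (R := _) (MvPolynomial.X m ^ (s+1)) * PowerSeries.X with hf
  set a : MvPolynomial (Fin n) ℚ :=
    (∑ l, MvPolynomial.X l) ^ (s+1) - ∑ l, MvPolynomial.X l ^ (s+1) with ha
  set Q : PowerSeries (MvPolynomial (Fin n) ℚ) :=
    ∏ m ∈ (Finset.univ.erase i).erase j, f m with hQ
  set S₁ : MvPolynomial (Fin n) ℚ :=
    ∑ m ∈ Finset.range (2*s+1), u ^ m * v ^ (2*s+1-1-m) with hS₁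
  set S₂ : MvPolynomial (Fin n) ℚ :=
    ∑ m ∈ Finset.range s, u ^ m * v ^ (s-1-m) with hS₂
  have g1 : S₁ * (u - v) = u ^ (2*s+1) - v ^ (2*s+1) := geom_sum₂_mul u v (2*s+1)
  have g2 : S₂ * (u - v) = u ^ s - v ^ s := geom_sum₂_mul u v s
  -- the witness
  refine ⟨PowerSeries.C (R := _) ((s+1 : ℕ) : MvPolynomial (Fin n) ℚ) * PowerSeries.X^2 *
      (PowerSeries.C (R := _) S₁ + PowerSeries.C (R := _) (u^(s+1) * v^(s+1) * S₂) * PowerSeries.X) * Q *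
      E a, ?_, ?_⟩
  · -- nonnegativity
    refine ((((NNps.C (NN.natCast _)).mul (NNps.X.pow 2)).mul ?_).mul ?_).mul
      (NNps.E (NN_a _ hr))
    · refine (NNps.C ?_).add ((NNps.C ?_).mul NNps.X)
      · exact NN.sum _ _ fun m _ => ((NN.X i).pow m).mul ((NN.X j).pow _)
      · exact (((NN.X i).pow _).mul ((NN.X j).pow _)).mul
          (NN.sum _ _ fun m _ => ((NN.X i).pow m).mul ((NN.X j).pow _))
    · exact NNps.prod _ _ fun m _ => NNps.one.add ((NNps.C ((NN.X m).pow _)).mul NNps.X)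
  · -- the derivative computation
    have h0 : hSeries n (s+1) = (∏ m, f m) * E a := by
      rw [hSeries, expPS_CX]
    have hfm : ∀ m, Dhat D (f m)
        = PowerSeries.C (R := _) (D (MvPolynomial.X m ^ (s+1))) * PowerSeries.X := by
      intro m
      simp only [hf]
      rw [Dhat_add, Dhat_one, Dhat_CX, zero_add]
    have hDu : D (u ^ (s+1)) = ((s+1 : ℕ) : MvPolynomial (Fin n) ℚ) * u ^ s := by
      rw [hD, Derivation.sub_apply, hu, MvPolynomial.pderiv_pow, MvPolynomial.pderiv_pow,
        MvPolynomial.pderiv_X_self, MvPolynomial.pderiv_X_of_ne hij]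
      simp
    have hDv : D (v ^ (s+1)) = -(((s+1 : ℕ) : MvPolynomial (Fin n) ℚ) * v ^ s) := by
      rw [hD, Derivation.sub_apply, hv, MvPolynomial.pderiv_pow, MvPolynomial.pderiv_pow,
        MvPolynomial.pderiv_X_self, MvPolynomial.pderiv_X_of_ne hij.symm]
      simp
    have hD0 : ∀ m, m ≠ i → m ≠ j → D (MvPolynomial.X m ^ (s+1)) = 0 := by
      intro m hmi hmj
      rw [hD, Derivation.sub_apply, MvPolynomial.pderiv_pow, MvPolynomial.pderiv_pow,
        MvPolynomial.pderiv_X_of_ne hmi, MvPolynomial.pderiv_X_of_ne hmj]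
      simp
    have hsum1 : ∀ t : Fin n, MvPolynomial.pderiv t (∑ l, (MvPolynomial.X l : MvPolynomial (Fin n) ℚ)) = 1 := by
      intro t
      rw [map_sum, Finset.sum_eq_single t]
      · exact MvPolynomial.pderiv_X_self t
      · intro l _ hl
        exact MvPolynomial.pderiv_X_of_ne hl
      · intro h; exact absurd (Finset.mem_univ t) h
    have hsum2 : ∀ t : Fin n, MvPolynomial.pderiv t (∑ l, (MvPolynomial.X l : MvPolynomial (Fin n) ℚ) ^ (s+1))
        = ((s+1 : ℕ) : MvPolynomial (Fin n) ℚ) * MvPolynomial.X t ^ s := by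
      intro t
      rw [map_sum, Finset.sum_eq_single t]
      · rw [MvPolynomial.pderiv_pow, MvPolynomial.pderiv_X_self]
        simp
      · intro l _ hl
        rw [MvPolynomial.pderiv_pow, MvPolynomial.pderiv_X_of_ne hl]
        simp
      · intro h; exact absurd (Finset.mem_univ t) h
    have hDa : D a = ((s+1 : ℕ) : MvPolynomial (Fin n) ℚ) * v ^ s
        - ((s+1 : ℕ) : MvPolynomial (Fin n) ℚ) * u ^ s := by
      rw [hD, Derivation.sub_apply, ha, map_sub, map_sub, MvPolynomial.pderiv_pow,
        MvPolynomial.pderiv_pow, hsum1, hsum1, hsum2, hsum2, hu, hv]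
      ring
    have hQi : ∏ b ∈ Finset.univ.erase i, f b = f j * Q := by
      rw [hQ, Finset.mul_prod_erase]
      exact Finset.mem_erase.2 ⟨hij.symm, Finset.mem_univ j⟩
    have hQj : ∏ b ∈ Finset.univ.erase j, f b = f i * Q := by
      rw [hQ, Finset.erase_right_comm, Finset.mul_prod_erase]
      exact Finset.mem_erase.2 ⟨hij, Finset.mem_univ i⟩
    have hQfull : ∏ m, f m = f i * (f j * Q) := by
      rw [← hQi, Finset.mul_prod_erase]
      exact Finset.mem_univ i
    have hprod : Dhat D (∏ m, f m)
        = PowerSeries.C (R := _) (D (u ^ (s+1))) * PowerSeries.X * (f j * Q)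
          + PowerSeries.C (R := _) (D (v ^ (s+1))) * PowerSeries.X * (f i * Q) := by
      rw [Dhat_prod]
      rw [← Finset.sum_subset (Finset.subset_univ ({i, j} : Finset (Fin n)))
        (fun m _ hm => ?_)]
      · rw [Finset.sum_pair hij, hfm i, hfm j, hQi, hQj, hu, hv]
      · simp only [Finset.mem_insert, Finset.mem_singleton] at hm
        push_neg at hm
        rw [hfm m, hD0 m hm.1 hm.2]
        simp
    have G1 : PowerSeries.C (R := _) S₁ * (PowerSeries.C (R := _) u - PowerSeries.C (R := _) v)
        = (PowerSeries.C (R := MvPolynomial (Fin n) ℚ) u) ^ (2*s+1)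
          - (PowerSeries.C (R := _) v) ^ (2*s+1) := by
      have := congrArg (PowerSeries.C (R := MvPolynomial (Fin n) ℚ)) g1
      simpa only [map_mul, map_sub, map_pow] using this
    have G2 : PowerSeries.C (R := _) S₂ * (PowerSeries.C (R := _) u - PowerSeries.C (R := _) v)
        = (PowerSeries.C (R := MvPolynomial (Fin n) ℚ) u) ^ s - (PowerSeries.C (R := _) v) ^ s := by
      have := congrArg (PowerSeries.C (R := MvPolynomial (Fin n) ℚ)) g2
      simpa only [map_mul, map_sub, map_pow] using this
    rw [h0, Dhat_mul, hprod, Dhat_E, hDu, hDv, hDa, hQfull]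
    simp only [hf, map_mul, map_sub, map_add, map_neg, map_pow]
    linear_combination
      (PowerSeries.C (R := MvPolynomial (Fin n) ℚ) ((s+1 : ℕ) : MvPolynomial (Fin n) ℚ)
        * PowerSeries.X^2 * Q * E a) * G1
      + (PowerSeries.C (R := MvPolynomial (Fin n) ℚ) ((s+1 : ℕ) : MvPolynomial (Fin n) ℚ)
        * PowerSeries.X^3 * (PowerSeries.C (R := _) u)^(s+1) * (PowerSeries.C (R := _) v)^(s+1) * Q * E a) * G2


lemma aeval_nonneg {n : ℕ} {p : MvPolynomial (Fin n) ℚ} (hp : NN p) (x : Fin n → ℝ)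
    (hx : ∀ l, 0 ≤ x l) : 0 ≤ MvPolynomial.aeval x p := by
  rw [MvPolynomial.aeval_def, MvPolynomial.eval₂_eq]
  refine Finset.sum_nonneg fun d _ =>
    mul_nonneg ?_ (Finset.prod_nonneg fun l _ => pow_nonneg (hx l) _)
  rw [eq_ratCast (algebraMap ℚ ℝ)]
  exact_mod_cast hp d

theorem stmt_15 (r n k : ℕ) (hr : 1 ≤ r) (hn : 2 ≤ n) (hk : 1 ≤ k)
    (i j : Fin n) (hij : i ≠ j) :
    ∃ δ : MvPolynomial (Fin n) ℚ,
      (∀ m : (Fin n) →₀ ℕ, 0 ≤ MvPolynomial.coeff m δ) ∧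
      MvPolynomial.pderiv i (Hpoly n r k) - MvPolynomial.pderiv j (Hpoly n r k)
        = -((MvPolynomial.X i - MvPolynomial.X j) * δ) ∧
      ∀ x : Fin n → ℝ, (∀ l, 0 ≤ x l) →
        (x i - x j) *
          (MvPolynomial.aeval x (MvPolynomial.pderiv i (Hpoly n r k)) -
            MvPolynomial.aeval x (MvPolynomial.pderiv j (Hpoly n r k))) ≤ 0 := by
  obtain ⟨W, hW, hEq⟩ := main_identity r n hr i j hij
  have hpoly : MvPolynomial.pderiv i (Hpoly n r k) - MvPolynomial.pderiv j (Hpoly n r k)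
      = -((MvPolynomial.X i - MvPolynomial.X j) * PowerSeries.coeff (R := _) k W) := by
    have h1 : MvPolynomial.pderiv i (Hpoly n r k) - MvPolynomial.pderiv j (Hpoly n r k)
        = PowerSeries.coeff (R := _) k
            (Dhat (MvPolynomial.pderiv i - MvPolynomial.pderiv j) (hSeries n r)) := by
      rw [coeff_Dhat, Derivation.sub_apply]
      rfl
    rw [h1, hEq, PowerSeries.coeff_C_mul]
    ring
  refine ⟨PowerSeries.coeff (R := _) k W, hW k, hpoly, ?_⟩
  intro x hx
  have hA : 0 ≤ MvPolynomial.aeval x (PowerSeries.coeff (R := _) k W) :=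
    aeval_nonneg (hW k) x hx
  have e : MvPolynomial.aeval x (MvPolynomial.pderiv i (Hpoly n r k)) -
      MvPolynomial.aeval x (MvPolynomial.pderiv j (Hpoly n r k))
      = -((x i - x j) * MvPolynomial.aeval x (PowerSeries.coeff (R := _) k W)) := by
    rw [← map_sub, hpoly]
    simp
  rw [e]
  nlinarith [sq_nonneg (x i - x j), mul_nonneg (mul_nonneg (sq_nonneg (x i - x j)) hA) hA]
end
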